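/- Let K be a pointed closed convex cone in ℝⁿ with nonempty interior inducing partial order ⪯, and let a ∈ interior(K) with a ≠ 0. For the open ball U of radius r > 0 centered at the origin, there exists t₀ ∈ (0,1) such that (t₀a)↓ ∩ (-t₀a)↑ ⊆ U. -/

import Mathlib

theorem stmt_4 (n : ℕ) (K : Set (EuclideanSpace ℝ (Fin n)))
    (hK_closed : IsClosed K) (hK_convex : Convex ℝ K)
    (hK_cone : ∀ (t : ℝ), 0 ≤ t → ∀ x ∈ K, t • x ∈ K)
    (hK_pointed : K ∩ (-K) = {0})
    (a : EuclideanSpace ℝ (Fin n)) (ha : a ∈ interior K) (ha0 : a ≠ 0)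
    (r : ℝ) (hr : 0 < r) :
    ∃ t₀ : ℝ, 0 < t₀ ∧ t₀ < 1 ∧
      {z : EuclideanSpace ℝ (Fin n) | t₀ • a - z ∈ K ∧ z - (-(t₀ • a)) ∈ K} ⊆
        Metric.ball 0 r := by
  -- Step 1: the order interval [-a, a] is bounded
  obtain ⟨R, hR, hbound⟩ : ∃ R > 0, ∀ z : EuclideanSpace ℝ (Fin n),
      a - z ∈ K → a + z ∈ K → ‖z‖ < R := by
    by_contra h
    push_neg at h
    choose z hz1 hz2 hz3 using fun k : ℕ => h (k + 1) (by positivity)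
    have hzpos : ∀ k : ℕ, 0 < ‖z k‖ := fun k =>
      lt_of_lt_of_le (by positivity) (hz3 k)
    set w : ℕ → EuclideanSpace ℝ (Fin n) := fun k => ‖z k‖⁻¹ • z k with hw
    have hwmem : ∀ k, w k ∈ Metric.sphere (0 : EuclideanSpace ℝ (Fin n)) 1 := by
      intro k
      rw [mem_sphere_zero_iff_norm, hw]
      simp [norm_smul, abs_of_nonneg (inv_nonneg.mpr (norm_nonneg _)),
        inv_mul_cancel₀ (hzpos k).ne']
    obtain ⟨L, hL, φ, hφ, hconv⟩ :=
      (isCompact_sphere (0 : EuclideanSpace ℝ (Fin n)) 1).tendsto_subseq hwmem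
    have hLnorm : ‖L‖ = 1 := mem_sphere_zero_iff_norm.mp hL
    -- inverse norms tend to 0
    have hinv : Filter.Tendsto (fun m => ‖z (φ m)‖⁻¹) Filter.atTop (nhds 0) := by
      have h1 : ∀ m : ℕ, ‖z (φ m)‖⁻¹ ≤ ((m : ℝ) + 1)⁻¹ := by
        intro m
        apply inv_anti₀ (by positivity)
        exact le_trans (by exact_mod_cast Nat.succ_le_succ (hφ.id_le m)) (hz3 (φ m))
      have h2 : ∀ m : ℕ, 0 ≤ ‖z (φ m)‖⁻¹ := fun m => by positivity
      exact tendsto_of_tendsto_of_tendsto_of_le_of_le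
        tendsto_const_nhds tendsto_one_div_add_atTop_nhds_zero_nat
        h2 (fun m => by simpa [one_div] using h1 m)
    have hsmul : Filter.Tendsto (fun m => ‖z (φ m)‖⁻¹ • a) Filter.atTop
        (nhds (0 : EuclideanSpace ℝ (Fin n))) := by
      simpa using hinv.smul_const a
    -- -L ∈ K
    have hnegL : -L ∈ K := by
      have hmem : ∀ m, ‖z (φ m)‖⁻¹ • a - w (φ m) ∈ K := by
        intro m
        have := hK_cone ‖z (φ m)‖⁻¹ (by positivity) _ (hz1 (φ m))
        rwa [smul_sub] at this
      have htend : Filter.Tendsto (fun m => ‖z (φ m)‖⁻¹ • a - w (φ m))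
          Filter.atTop (nhds (-L)) := by
        simpa using hsmul.sub hconv
      exact hK_closed.mem_of_tendsto htend (Filter.Eventually.of_forall hmem)
    have hposL : L ∈ K := by
      have hmem : ∀ m, ‖z (φ m)‖⁻¹ • a + w (φ m) ∈ K := by
        intro m
        have := hK_cone ‖z (φ m)‖⁻¹ (by positivity) _ (hz2 (φ m))
        rwa [smul_add] at this
      have htend : Filter.Tendsto (fun m => ‖z (φ m)‖⁻¹ • a + w (φ m))
          Filter.atTop (nhds L) := by
        simpa using hsmul.add hconv
      exact hK_closed.mem_of_tendsto htend (Filter.Eventually.of_forall hmem)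
    have : L = 0 := by
      have : L ∈ K ∩ (-K) := ⟨hposL, by simpa using hnegL⟩
      rw [hK_pointed] at this
      simpa using this
    rw [this] at hLnorm
    simp at hLnorm
  -- Step 2: choose t₀
  refine ⟨min (r / (2 * R)) (1 / 2), lt_min (by positivity) (by norm_num),
    lt_of_le_of_lt (min_le_right _ _) (by norm_num), ?_⟩
  set t₀ := min (r / (2 * R)) (1 / 2) with ht₀
  have ht₀pos : 0 < t₀ := lt_min (by positivity) (by norm_num)
  intro z hz
  obtain ⟨h1, h2⟩ := hz
  have h2' : t₀ • a + z ∈ K := by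
    have : z - (-(t₀ • a)) = t₀ • a + z := by abel
    rwa [this] at h2
  have key1 : a - t₀⁻¹ • z ∈ K := by
    have := hK_cone t₀⁻¹ (by positivity) _ h1
    rwa [smul_sub, smul_smul, inv_mul_cancel₀ ht₀pos.ne', one_smul] at this
  have key2 : a + t₀⁻¹ • z ∈ K := by
    have := hK_cone t₀⁻¹ (by positivity) _ h2'
    rwa [smul_add, smul_smul, inv_mul_cancel₀ ht₀pos.ne', one_smul] at this
  have hznorm := hbound _ key1 key2
  rw [norm_smul, Real.norm_eq_abs, abs_of_nonneg (inv_nonneg.mpr ht₀pos.le)] at hznorm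
  have : ‖z‖ < t₀ * R := by
    have := (inv_mul_lt_iff₀ ht₀pos).mp hznorm
    linarith [this]
  rw [mem_ball_zero_iff]
  calc ‖z‖ < t₀ * R := this
    _ ≤ (r / (2 * R)) * R := by
        have : t₀ ≤ r / (2 * R) := min_le_left _ _
        nlinarith
    _ = r / 2 := by field_simp
    _ < r := by linarith
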